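/- The series of SFTR-1/2 weights converges and its sum is zero: Σ_{m=0}^{∞} ω_m = 0. -/

import Mathlib

/-- The SFTR-1/2 weights `ω_m`. -/
noncomputable def sftrW (α : ℝ) : ℕ → ℝ
  | 0 => (2 * α / (α + 1)) ^ α
  | 1 => -α * (2 * α / (α + 1)) ^ (α + 1)
  | (m + 2) =>
      2 * α / (((m : ℝ) + 2) * (α + 1)) *
        (((((m : ℝ) + 2) - 1) / α - α) * sftrW α (m + 1) +
          (α - 1) / (2 * α) * (((m : ℝ) + 2) - 2) * sftrW α m)

/-- The cleaned-up three-term recurrence for the weights. -/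
lemma sftrW_aux_rec {α : ℝ} (hα0 : 0 < α) (n : ℕ) :
    (α + 1) * ((n : ℝ) + 2) * sftrW α (n + 2)
      = (2 * (n : ℝ) + 2 - 2 * α ^ 2) * sftrW α (n + 1) + (α - 1) * (n : ℝ) * sftrW α n := by
  have h1 : α ≠ 0 := ne_of_gt hα0
  have h2 : α + 1 ≠ 0 := by nlinarith
  have h3 : ((n : ℝ) + 2) ≠ 0 := by positivity
  rw [sftrW]; field_simp; ring

lemma sftrW_zero_pos {α : ℝ} (hα0 : 0 < α) : 0 < sftrW α 0 := by
  have hc : 0 < 2 * α / (α + 1) := by positivity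
  exact Real.rpow_pos_of_pos hc α

lemma sftrW_one_nonpos {α : ℝ} (hα0 : 0 < α) : sftrW α 1 ≤ 0 := by
  have hc : (0:ℝ) ≤ 2 * α / (α + 1) := by positivity
  show -α * (2 * α / (α + 1)) ^ (α + 1) ≤ 0
  have := Real.rpow_nonneg hc (α + 1)
  nlinarith

/-- Key base identity: `(1+α) ω₁ = -2α² ω₀`. -/
lemma sftrW_one_eq {α : ℝ} (hα0 : 0 < α) :
    (1 + α) * sftrW α 1 = -2 * α ^ 2 * sftrW α 0 := by
  have hc : 0 < 2 * α / (α + 1) := by positivity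
  show (1 + α) * (-α * (2 * α / (α + 1)) ^ (α + 1)) = -2 * α ^ 2 * (2 * α / (α + 1)) ^ α
  rw [Real.rpow_add_one (ne_of_gt hc)]
  have h2 : α + 1 ≠ 0 := by nlinarith
  field_simp; ring

/-- The identity (⋆): `(α+1)(n+2) ω_{n+2} = (1-α)(n+1) ω_{n+1} - 2α² S_{n+1}`. -/
lemma sftrW_star {α : ℝ} (hα0 : 0 < α) (n : ℕ) :
    (α + 1) * ((n : ℝ) + 2) * sftrW α (n + 2)
      = (1 - α) * ((n : ℝ) + 1) * sftrW α (n + 1)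
        - 2 * α ^ 2 * ∑ m ∈ Finset.range (n + 2), sftrW α m := by
  induction n with
  | zero =>
      have E := sftrW_aux_rec hα0 0
      have K := sftrW_one_eq hα0
      simp only [Finset.sum_range_succ, Finset.sum_range_one] at *
      push_cast at *
      linear_combination E + K
  | succ n ih =>
      have E := sftrW_aux_rec hα0 (n + 1)
      push_cast at E ⊢
      rw [Finset.sum_range_succ]
      linear_combination E + ih

/-- Invariant: `ω_{n+1} ≤ 0` and `(1+α) ω_{n+2} ≤ (1-α) ω_{n+1}`. -/
lemma sftrW_inv {α : ℝ} (hα0 : 0 < α) (hα1 : α < 1) (n : ℕ) :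
    sftrW α (n + 1) ≤ 0 ∧ (1 + α) * sftrW α (n + 2) ≤ (1 - α) * sftrW α (n + 1) := by
  induction n with
  | zero =>
      have h1 := sftrW_one_nonpos hα0
      refine ⟨h1, ?_⟩
      have E := sftrW_aux_rec hα0 0
      push_cast at E
      have hprod : (1 - α) * α * sftrW α 1 ≤ 0 :=
        mul_nonpos_of_nonneg_of_nonpos (by nlinarith) h1
      nlinarith [E, hprod]
  | succ n ih =>
      obtain ⟨h0, h1⟩ := ih
      have h2 : sftrW α (n + 2) ≤ 0 := by nlinarith
      refine ⟨h2, ?_⟩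
      have E := sftrW_aux_rec hα0 (n + 1)
      push_cast at E
      simp only [show n + 1 + 2 = n + 3 from rfl, show n + 1 + 1 = n + 2 from rfl] at E ⊢
      have hn0 : (0:ℝ) ≤ (n : ℝ) + 1 := by positivity
      have hθn := mul_le_mul_of_nonneg_left h1 hn0
      have h2α : 2 * α * (1 - α) * sftrW α (n + 2) ≤ 0 :=
        mul_nonpos_of_nonneg_of_nonpos (by nlinarith) h2
      have h3pos : (0:ℝ) < (n : ℝ) + 3 := by positivity
      have hP : ((n : ℝ) + 3) * ((1 + α) * sftrW α (n + 3))
          ≤ ((n : ℝ) + 3) * ((1 - α) * sftrW α (n + 2)) := by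
        linarith [E, hθn, h2α]
      exact le_of_mul_le_mul_left hP h3pos

/-- Positivity of the partial sums. -/
lemma sftrW_Spos {α : ℝ} (hα0 : 0 < α) (hα1 : α < 1) (n : ℕ) :
    0 ≤ ∑ m ∈ Finset.range (n + 1), sftrW α m := by
  cases n with
  | zero => simpa [Finset.sum_range_one] using (sftrW_zero_pos hα0).le
  | succ n =>
      show 0 ≤ ∑ m ∈ Finset.range (n + 2), sftrW α m
      have hst := sftrW_star hα0 n
      obtain ⟨h0, h1⟩ := sftrW_inv hα0 hα1 n
      have hn0 : (0:ℝ) ≤ (n : ℝ) + 2 := by positivity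
      have hθn := mul_le_mul_of_nonneg_left h1 hn0
      have h0m : (1 - α) * sftrW α (n + 1) ≤ 0 :=
        mul_nonpos_of_nonneg_of_nonpos (by nlinarith) h0
      have h2S : 0 ≤ 2 * α ^ 2 * ∑ m ∈ Finset.range (n + 2), sftrW α m := by
        linarith [hst, hθn, h0m]
      have hq : (0:ℝ) < 2 * α ^ 2 := by positivity
      nlinarith [h2S, hq]

/-- Descent: the partial sums cannot stay above any positive level. -/
lemma sftrW_descent {α ε : ℝ} (hα0 : 0 < α) (hα1 : α < 1) (hε : 0 < ε)
    (h : ∀ n : ℕ, ε ≤ ∑ m ∈ Finset.range (n + 1), sftrW α m) : False := by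
  set S : ℕ → ℝ := fun n => ∑ m ∈ Finset.range (n + 1), sftrW α m with hS
  set d : ℝ := 2 * α ^ 2 * ε / (α + 1) with hdef
  have hα1' : (0:ℝ) < α + 1 := by linarith
  have hd : 0 < d := by positivity
  have key : ∀ n : ℕ, S (n + 2) ≤ S (n + 1) - d / ((n : ℝ) + 2) := by
    intro n
    have hst := sftrW_star hα0 n
    have h0 := (sftrW_inv hα0 hα1 n).1
    have h0m : (1 - α) * ((n : ℝ) + 1) * sftrW α (n + 1) ≤ 0 :=
      mul_nonpos_of_nonneg_of_nonpos (mul_nonneg (by linarith) (by positivity)) h0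
    have hSn : ε ≤ ∑ m ∈ Finset.range (n + 2), sftrW α m := h (n + 1)
    have hb : (0:ℝ) < (α + 1) * ((n : ℝ) + 2) := by positivity
    have hW : sftrW α (n + 2) ≤ -(2 * α ^ 2 * ε) / ((α + 1) * ((n : ℝ) + 2)) := by
      rw [le_div_iff₀ hb]
      nlinarith [hst, h0m, hSn]
    have heq : -(2 * α ^ 2 * ε) / ((α + 1) * ((n : ℝ) + 2)) = -(d / ((n : ℝ) + 2)) := by
      rw [hdef]; field_simp
    show (∑ m ∈ Finset.range (n + 3), sftrW α m)
        ≤ (∑ m ∈ Finset.range (n + 2), sftrW α m) - d / ((n : ℝ) + 2)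
    rw [Finset.sum_range_succ]
    rw [heq] at hW
    linarith
  have tel : ∀ N : ℕ, S (N + 1) ≤ S 1 - d * ∑ k ∈ Finset.range N, (1 / ((k : ℝ) + 2)) := by
    intro N
    induction N with
    | zero => simp
    | succ N ih =>
        have hk := key N
        rw [Finset.sum_range_succ, mul_add]
        have : d * (1 / ((N : ℝ) + 2)) = d / ((N : ℝ) + 2) := by ring
        linarith [hk, ih]
  set M : ℝ := (S 1 - ε) / d with hM
  have hdiv := Real.tendsto_sum_range_one_div_nat_succ_atTop
  obtain ⟨a, ha⟩ := Filter.eventually_atTop.mp (Filter.tendsto_atTop.mp hdiv (M + 2))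
  have hsum := ha (a + 1) (Nat.le_succ a)
  rw [Finset.sum_range_succ'] at hsum
  push_cast at hsum
  have hsum2 : M + 1 ≤ ∑ i ∈ Finset.range a, (1 / ((i : ℝ) + 2)) := by
    have : (∑ i ∈ Finset.range a, (1 / ((i : ℝ) + 1 + 1)))
        = ∑ i ∈ Finset.range a, (1 / ((i : ℝ) + 2)) := by
      apply Finset.sum_congr rfl; intro i _; ring_nf
    linarith [hsum, this.symm.le]
  have hdM : d * M = S 1 - ε := by
    rw [hM]; field_simp
  have hmul := mul_le_mul_of_nonneg_left hsum2 hd.le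
  have h1 := tel a
  have h2 := h (a + 1)
  change ε ≤ S (a + 1) at h2
  nlinarith [h1, h2, hmul, hdM, hd]

theorem sftrW_sum_zero (α : ℝ) (hα : α ∈ Set.Ioo (0 : ℝ) 1) :
    Filter.Tendsto (fun n : ℕ => ∑ m ∈ Finset.range (n + 1), sftrW α m)
      Filter.atTop (nhds 0) := by
  obtain ⟨hα0, hα1⟩ := hα
  rw [Metric.tendsto_atTop]
  intro ε hε
  have hhalf : 0 < ε / 2 := by linarith
  have hex : ∃ n : ℕ, (∑ m ∈ Finset.range (n + 1), sftrW α m) < ε / 2 := by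
    by_contra hcon
    push_neg at hcon
    exact sftrW_descent hα0 hα1 hhalf fun n => hcon n
  obtain ⟨N, hN⟩ := hex
  refine ⟨N, fun n hn => ?_⟩
  have hanti : Antitone fun n : ℕ => ∑ m ∈ Finset.range (n + 1), sftrW α m := by
    apply antitone_nat_of_succ_le
    intro m
    show (∑ k ∈ Finset.range (m + 2), sftrW α k) ≤ ∑ k ∈ Finset.range (m + 1), sftrW α k
    rw [Finset.sum_range_succ]
    have := (sftrW_inv hα0 hα1 m).1
    linarith
  have hle := hanti hn
  rw [Real.dist_eq, sub_zero, abs_of_nonneg (sftrW_Spos hα0 hα1 n)]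
  simp only at hle
  linarith
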